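/- In the rational vector space Q^n with weight vectors w_{0i} = e_i (1 ≤ i ≤ n) and w_{jk} = e_j + e_k (1 ≤ j < k ≤ n), the cone generated by {w_{jk} : {j,k} ∈ J} where J is defined from an exchange-closed set I as J = (I ∩ pairs from {1,...,n}) ∪ {{i,j} : {0,i},{0,j} ∈ I}, equals the intersection of the cone generated by {w_η : η ∈ I} with the cone Ω* = cone(e_i + e_j : 1 ≤ i < j ≤ n). -/

import Mathlib

open Finset

/-- The convex cone generated by a set of vectors: all finite nonnegative
rational linear combinations. -/
def coneOf {m : ℕ} (S : Set (Fin m → ℚ)) : Set (Fin m → ℚ) :=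
  {x | ∃ (r : ℕ) (c : Fin r → ℚ) (v : Fin r → Fin m → ℚ),
    (∀ i, 0 ≤ c i) ∧ (∀ i, v i ∈ S) ∧ x = ∑ i, c i • v i}

/-- `evec n i` is `eᵢ` for `i ≠ 0` and `0` for `i = 0`, so that the weight of the
pair `{i,j}` is `evec n i + evec n j`: `w_{0i} = eᵢ` and `w_{jk} = eⱼ + eₖ`. -/
def evec (n : ℕ) (i : Fin (n + 1)) : Fin (n + 1) → ℚ :=
  if i = 0 then 0 else Pi.single i 1

/-- The set `J = (I ∩ pairs from {1,…,n}) ∪ {{i,j} : {0,i} ∈ I and {0,j} ∈ I}`. -/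
def Jset (n : ℕ) (I : Set (Sym2 (Fin (n + 1)))) : Set (Sym2 (Fin (n + 1))) :=
  {e | (e ∈ I ∧ (0 : Fin (n + 1)) ∉ e) ∨
    ∃ a b : Fin (n + 1), a ≠ 0 ∧ b ≠ 0 ∧ a ≠ b ∧ e = s(a, b) ∧
      s((0 : Fin (n + 1)), a) ∈ I ∧ s((0 : Fin (n + 1)), b) ∈ I}

namespace ConeAux
variable {m : ℕ} {S T : Set (Fin m → ℚ)}

lemma zero_mem (S : Set (Fin m → ℚ)) : (0 : Fin m → ℚ) ∈ coneOf S :=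
  ⟨0, Fin.elim0, Fin.elim0, fun i => i.elim0, fun i => i.elim0, by simp⟩

lemma mem_of {w : Fin m → ℚ} (h : w ∈ S) : w ∈ coneOf S :=
  ⟨1, fun _ => 1, fun _ => w, fun _ => zero_le_one, fun _ => h, by simp⟩

lemma smul_mem {a : ℚ} {x : Fin m → ℚ} (ha : 0 ≤ a) (hx : x ∈ coneOf S) :
    a • x ∈ coneOf S := by
  obtain ⟨r, c, v, hc, hv, rfl⟩ := hx
  exact ⟨r, fun i => a * c i, v, fun i => mul_nonneg ha (hc i), hv, by
    rw [Finset.smul_sum]; simp [smul_smul]⟩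

lemma add_mem {x y : Fin m → ℚ} (hx : x ∈ coneOf S) (hy : y ∈ coneOf S) :
    x + y ∈ coneOf S := by
  obtain ⟨r, c, v, hc, hv, rfl⟩ := hx
  obtain ⟨r', c', v', hc', hv', rfl⟩ := hy
  refine ⟨r + r', Fin.append c c', Fin.append v v', ?_, ?_, ?_⟩
  · exact Fin.addCases (by simp [hc]) (by simp [hc'])
  · exact Fin.addCases (by simp [hv]) (by simp [hv'])
  · rw [Fin.sum_univ_add]; simp

lemma sum_mem {α : Type*} {s : Finset α} {f : α → Fin m → ℚ}
    (h : ∀ i ∈ s, f i ∈ coneOf S) : (∑ i ∈ s, f i) ∈ coneOf S := by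
  classical
  induction s using Finset.induction with
  | empty => simpa using zero_mem S
  | insert _ _ hne ih =>
    rw [Finset.sum_insert hne]
    exact add_mem (h _ (Finset.mem_insert_self _ _))
      (ih fun i hi => h i (Finset.mem_insert_of_mem hi))

lemma coneOf_le (h : ∀ w ∈ S, w ∈ coneOf T) : coneOf S ⊆ coneOf T := by
  rintro x ⟨r, c, v, hc, hv, rfl⟩
  exact sum_mem fun i _ => smul_mem (hc i) (h _ (hv i))

lemma evec_zero (n : ℕ) : evec n 0 = 0 := by simp [evec]

lemma evec_ne {n : ℕ} {p : Fin (n+1)} (h : p ≠ 0) : evec n p = Pi.single p 1 := by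
  simp [evec, h]

lemma evec_apply (n : ℕ) (p s : Fin (n+1)) :
    evec n p s = if p ≠ 0 ∧ s = p then 1 else 0 := by
  rcases eq_or_ne p 0 with rfl | h
  · simp [evec]
  · simp [evec, h, Pi.single_apply]

lemma evec_nonneg (n : ℕ) (p s : Fin (n+1)) : 0 ≤ evec n p s := by
  rw [evec_apply]; split <;> norm_num

lemma sum_evec {n : ℕ} {p : Fin (n+1)} (h : p ≠ 0) : ∑ s, evec n p s = 1 := by
  simp [evec_apply, h]

lemma sum_smul_evec {n : ℕ} (f : Fin (n+1) → ℚ) (hf : f 0 = 0) :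
    ∑ k, f k • evec n k = f := by
  funext s
  rw [Finset.sum_apply]
  have : ∀ k, (f k • evec n k) s = if k = s then f s else 0 := by
    intro k
    rcases eq_or_ne k s with rfl | h
    · rcases eq_or_ne k 0 with rfl | h0
      · simp [evec_zero, hf]
      · simp [evec_apply, h0]
    · show f k * evec n k s = _
      rw [evec_apply, if_neg (by tauto), mul_zero, if_neg h]
  rw [Finset.sum_congr rfl fun k _ => this k]
  simp


lemma lemmaL {n : ℕ} (hn : 2 ≤ n) (T : Set (Fin (n+1))) (G : Set (Fin (n+1) → ℚ))
    (hT0 : ∀ t ∈ T, t ≠ 0)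
    (hTG : ∀ p q, p ∈ T → q ∈ T → p ≠ q → (evec n p + evec n q) ∈ G) :
    ∀ (d : Fin (n+1) → ℚ), (∀ t, 0 ≤ d t) → (∀ t, d t ≠ 0 → t ∈ T) →
    (∀ k, 2 * d k ≤ ∑ t, d t) → d ∈ coneOf G := by
  suffices H : ∀ (N : ℕ) (d : Fin (n+1) → ℚ),
      (univ.filter (fun t => d t ≠ 0)).card ≤ N →
      (∀ t, 0 ≤ d t) → (∀ t, d t ≠ 0 → t ∈ T) →
      (∀ k, 2 * d k ≤ ∑ t, d t) → d ∈ coneOf G by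
    exact fun d h1 h2 h3 => H _ d le_rfl h1 h2 h3
  intro N
  induction N with
  | zero =>
    intro d hcard h1 h2 h3
    have hz : ∀ t, d t = 0 := by
      intro t
      by_contra ht
      have hmem : t ∈ univ.filter (fun t => d t ≠ 0) := by simp [ht]
      rw [Finset.card_eq_zero.mp (Nat.le_zero.mp hcard)] at hmem
      simp at hmem
    have hd : d = 0 := funext fun t => hz t
    rw [hd]; exact zero_mem G
  | succ N ih =>
    intro d hcard h0 hsupp hbal
    by_cases hd : d = 0
    · rw [hd]; exact zero_mem G
    set S := ∑ t, d t with hS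
    have hd0 : d 0 = 0 := by
      by_contra h
      exact hT0 0 (hsupp 0 h) rfl
    obtain ⟨t₀, ht₀⟩ : ∃ t, d t ≠ 0 := by
      by_contra h
      push_neg at h
      exact hd (funext fun t => h t)
    have ht₀pos : 0 < d t₀ := lt_of_le_of_ne (h0 t₀) (Ne.symm ht₀)
    have hSpos : 0 < S := lt_of_lt_of_le ht₀pos
      (Finset.single_le_sum (fun t _ => h0 t) (mem_univ t₀))
    obtain ⟨i, -, hi⟩ := Finset.exists_max_image univ d ⟨0, mem_univ 0⟩
    have hdi : 0 < d i := lt_of_lt_of_le ht₀pos (hi t₀ (mem_univ t₀))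
    have hiT : i ∈ T := hsupp i (ne_of_gt hdi)
    have hi0 : i ≠ 0 := hT0 i hiT
    -- second max
    have herase_sum : ∑ t ∈ univ.erase i, d t = S - d i := by
      rw [hS, ← Finset.add_sum_erase univ d (mem_univ i)]; ring
    obtain ⟨t₁, ht₁mem, ht₁⟩ : ∃ t ∈ univ.erase i, d t ≠ 0 := by
      apply Finset.exists_ne_zero_of_sum_ne_zero
      rw [herase_sum]
      have h2i := hbal i
      intro h
      linarith
    obtain ⟨j, hjmem, hj⟩ := Finset.exists_max_image (univ.erase i) d ⟨t₁, ht₁mem⟩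
    have hdj : 0 < d j := lt_of_le_of_ne (h0 j)
      (Ne.symm (fun h => ht₁ (le_antisymm (h ▸ hj t₁ ht₁mem) (h0 t₁))))
    have hjT : j ∈ T := hsupp j (ne_of_gt hdj)
    have hj0 : j ≠ 0 := hT0 j hjT
    have hij : i ≠ j := fun h => (Finset.mem_erase.mp hjmem).1 h.symm
    -- third max
    have hEne : ((univ.erase i).erase j).Nonempty := by
      apply Finset.card_pos.mp
      rw [Finset.card_erase_of_mem hjmem, Finset.card_erase_of_mem (mem_univ i)]
      simp only [Finset.card_univ, Fintype.card_fin]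
      omega
    obtain ⟨mx, hmxmem, hmx⟩ := Finset.exists_max_image ((univ.erase i).erase j) d hEne
    have hmxj : mx ≠ j := (Finset.mem_erase.mp hmxmem).1
    have hmxi : mx ≠ i := (Finset.mem_erase.mp (Finset.mem_erase.mp hmxmem).2).1
    have hdmj : d mx ≤ d j := hj mx (Finset.mem_erase.mp hmxmem).2
    have hdmi : d mx ≤ d i := hi mx (mem_univ mx)
    have htri : d i + d j + d mx ≤ S := by
      have hsub : ({i, j, mx} : Finset (Fin (n+1))) ⊆ univ := Finset.subset_univ _
      have := Finset.sum_le_sum_of_subset_of_nonneg hsub (fun t _ _ => h0 t)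
      rw [Finset.sum_insert (by simp [hij, Ne.symm hmxi]),
        Finset.sum_insert (by simp [Ne.symm hmxj]), Finset.sum_singleton] at this
      linarith [this]
    have htm : 0 < S / 2 - d mx := by
      rcases le_or_gt (d mx) 0 with h | h
      · linarith
      · linarith
    set tt := min (d j) (S / 2 - d mx) with htt
    have httpos : 0 < tt := lt_min hdj htm
    have httj : tt ≤ d j := min_le_left _ _
    have httm : tt ≤ S / 2 - d mx := min_le_right _ _
    set d' : Fin (n+1) → ℚ := fun s => d s - tt * (evec n i s + evec n j s) with hd'
    have hd'i : d' i = d i - tt := by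
      simp [hd', evec_apply, hi0, hij, Ne.symm hij]
    have hd'j : d' j = d j - tt := by
      simp [hd', evec_apply, hj0, hij, Ne.symm hij]
    have hd'o : ∀ s, s ≠ i → s ≠ j → d' s = d s := by
      intro s hsi hsj
      simp [hd', evec_apply, hsi, hsj]
    have hd'0 : ∀ s, 0 ≤ d' s := by
      intro s
      rcases eq_or_ne s i with rfl | hsi
      · rw [hd'i]; linarith [hi j (mem_univ j)]
      rcases eq_or_ne s j with rfl | hsj
      · rw [hd'j]; linarith
      · rw [hd'o s hsi hsj]; exact h0 s
    have hd'sum : ∑ s, d' s = S - 2 * tt := by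
      simp only [hd']
      rw [Finset.sum_sub_distrib, ← Finset.mul_sum, Finset.sum_add_distrib,
        sum_evec hi0, sum_evec hj0, ← hS]
      ring
    have hd'supp : ∀ s, d' s ≠ 0 → s ∈ T := by
      intro s hs
      rcases eq_or_ne s i with rfl | hsi
      · exact hiT
      rcases eq_or_ne s j with rfl | hsj
      · exact hjT
      · exact hsupp s (by rwa [hd'o s hsi hsj] at hs)
    have hd'bal : ∀ k, 2 * d' k ≤ ∑ s, d' s := by
      intro k
      rw [hd'sum]
      rcases eq_or_ne k i with rfl | hki
      · rw [hd'i]; linarith [hbal k]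
      rcases eq_or_ne k j with rfl | hkj
      · rw [hd'j]; linarith [hbal k]
      · rw [hd'o k hki hkj]
        have : d k ≤ d mx := hmx k (Finset.mem_erase.mpr ⟨hkj,
          Finset.mem_erase.mpr ⟨hki, mem_univ k⟩⟩)
        linarith
    have hdd' : d = d' + tt • (evec n i + evec n j) := by
      funext s
      simp [hd']
      ring
    have hedge : tt • (evec n i + evec n j) ∈ coneOf G :=
      smul_mem httpos.le (mem_of (hTG i j hiT hjT hij))
    have hd'0z : d' 0 = 0 := by
      rw [hd'o 0 (Ne.symm hi0) (Ne.symm hj0), hd0]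
    suffices hmem' : d' ∈ coneOf G by
      rw [hdd']; exact add_mem hmem' hedge
    rcases le_or_gt (d j) (S / 2 - d mx) with hcase | hcase
    · -- tt = d j, support shrinks
      have httval : tt = d j := min_eq_left hcase
      have hd'jz : d' j = 0 := by rw [hd'j, httval]; ring
      apply ih d' ?_ hd'0 hd'supp hd'bal
      have hsub2 : univ.filter (fun t => d' t ≠ 0) ⊆
          (univ.filter (fun t => d t ≠ 0)).erase j := by
        intro s hs
        rw [Finset.mem_filter] at hs
        refine Finset.mem_erase.mpr ⟨fun h => hs.2 (h ▸ hd'jz), ?_⟩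
        rw [Finset.mem_filter]
        refine ⟨mem_univ s, ?_⟩
        rcases eq_or_ne s i with rfl | hsi
        · exact ne_of_gt hdi
        rcases eq_or_ne s j with rfl | hsj
        · exact ne_of_gt hdj
        · rw [← hd'o s hsi hsj]; exact hs.2
      have hjmem2 : j ∈ univ.filter (fun t => d t ≠ 0) := by
        simp [ne_of_gt hdj]
      calc (univ.filter (fun t => d' t ≠ 0)).card
          ≤ ((univ.filter (fun t => d t ≠ 0)).erase j).card := Finset.card_le_card hsub2
        _ = (univ.filter (fun t => d t ≠ 0)).card - 1 := Finset.card_erase_of_mem hjmem2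
        _ ≤ N := by omega
    · -- tt = S/2 - d mx, direct finish
      have httval : tt = S / 2 - d mx := min_eq_right hcase.le
      have hd'sum2 : ∑ s, d' s = 2 * d mx := by rw [hd'sum, httval]; ring
      by_cases hdmx0 : d mx = 0
      · have : ∀ s, d' s = 0 := by
          intro s
          have := (Finset.sum_eq_zero_iff_of_nonneg (fun t _ => hd'0 t)).mp
            (by rw [hd'sum2, hdmx0]; ring) s (mem_univ s)
          exact this
        have : d' = 0 := funext fun s => this s
        rw [this]; exact zero_mem G
      · have hdmxpos : 0 < d mx := lt_of_le_of_ne (h0 mx) (Ne.symm hdmx0)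
        have hmxT : mx ∈ T := hsupp mx hdmx0
        have hmx0 : mx ≠ 0 := hT0 mx hmxT
        have hd'mx : d' mx = d mx := hd'o mx hmxi hmxj
        have hsum_erase : ∑ k ∈ univ.erase mx, d' k = d' mx := by
          have h1 : d' mx + ∑ k ∈ univ.erase mx, d' k = ∑ k, d' k :=
            Finset.add_sum_erase univ d' (mem_univ mx)
          rw [hd'sum2] at h1
          rw [hd'mx] at h1 ⊢
          linarith
        have hkey : d' = ∑ k ∈ univ.erase mx, d' k • (evec n mx + evec n k) := by
          have h1 : ∑ k ∈ univ.erase mx, d' k • (evec n mx + evec n k)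
              = (∑ k ∈ univ.erase mx, d' k) • evec n mx
                + ∑ k ∈ univ.erase mx, d' k • evec n k := by
            simp only [smul_add]
            rw [Finset.sum_add_distrib, ← Finset.sum_smul]
          have h2 : d' mx • evec n mx + ∑ k ∈ univ.erase mx, d' k • evec n k
              = ∑ k, d' k • evec n k :=
            Finset.add_sum_erase univ (fun k => d' k • evec n k) (mem_univ mx)
          rw [sum_smul_evec d' hd'0z] at h2
          rw [h1, hsum_erase]
          exact h2.symm
        rw [hkey]
        apply sum_mem
        intro k hk
        rcases eq_or_ne (d' k) 0 with hz | hz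
        · rw [hz, zero_smul]; exact zero_mem G
        · exact smul_mem (hd'0 k) (mem_of (hTG mx k hmxT (hd'supp k hz)
            (Ne.symm (Finset.mem_erase.mp hk).1)))


lemma lemmaM {n : ℕ} (G : Set (Fin (n+1) → ℚ)) (a : Fin (n+1))
    {r : ℕ} (s : Finset (Fin r)) (A B : Fin r → Fin (n+1))
    (hgen : ∀ i ∈ s, (evec n (A i) + evec n (B i)) ∈ G)
    (hchord : ∀ i ∈ s, a ≠ A i → a ≠ B i →
      (evec n a + evec n (A i)) ∈ G ∧ (evec n a + evec n (B i)) ∈ G) :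
    ∀ (c : Fin r → ℚ) (ε : ℚ), (∀ i, 0 ≤ c i) → 0 ≤ ε →
      ε ≤ 2 * ∑ i ∈ s.filter (fun i => a ≠ A i ∧ a ≠ B i), c i →
      (∑ i ∈ s, c i • (evec n (A i) + evec n (B i))) + ε • evec n a ∈ coneOf G := by
  classical
  have hz : ∀ c : Fin r → ℚ, (∀ i, 0 ≤ c i) →
      (∑ i ∈ s, c i • (evec n (A i) + evec n (B i))) ∈ coneOf G :=
    fun c hc => sum_mem fun i hi => smul_mem (hc i) (mem_of (hgen i hi))
  suffices H : ∀ (N : ℕ) (c : Fin r → ℚ) (ε : ℚ),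
      (s.filter (fun i => c i ≠ 0)).card ≤ N →
      (∀ i, 0 ≤ c i) → 0 ≤ ε →
      ε ≤ 2 * ∑ i ∈ s.filter (fun i => a ≠ A i ∧ a ≠ B i), c i →
      (∑ i ∈ s, c i • (evec n (A i) + evec n (B i))) + ε • evec n a ∈ coneOf G by
    exact fun c ε h1 h2 h3 => H _ c ε le_rfl h1 h2 h3
  intro N
  induction N with
  | zero =>
    intro c ε hcard hc hε hεle
    have hcz : ∀ i ∈ s, c i = 0 := by
      intro i hi
      by_contra h
      have : i ∈ s.filter (fun i => c i ≠ 0) := Finset.mem_filter.mpr ⟨hi, h⟩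
      rw [Finset.card_eq_zero.mp (Nat.le_zero.mp hcard)] at this
      simp at this
    have hε0 : ε = 0 := by
      have h1 : ∑ i ∈ s.filter (fun i => a ≠ A i ∧ a ≠ B i), c i = 0 :=
        Finset.sum_eq_zero fun i hi => hcz i (Finset.mem_filter.mp hi).1
      rw [h1] at hεle
      linarith
    rw [hε0, zero_smul, add_zero]
    exact hz c hc
  | succ N ih =>
    intro c ε hcard hc hε hεle
    rcases eq_or_lt_of_le hε with hε0 | hεpos
    · rw [← hε0, zero_smul, add_zero]
      exact hz c hc
    obtain ⟨i₀, hi₀f, hi₀c⟩ : ∃ i ∈ s.filter (fun i => a ≠ A i ∧ a ≠ B i), c i ≠ 0 := by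
      apply Finset.exists_ne_zero_of_sum_ne_zero
      intro h
      rw [h] at hεle
      linarith
    obtain ⟨hi₀s, haA, haB⟩ : i₀ ∈ s ∧ a ≠ A i₀ ∧ a ≠ B i₀ := by
      have := Finset.mem_filter.mp hi₀f
      exact ⟨this.1, this.2.1, this.2.2⟩
    have hc0pos : 0 < c i₀ := lt_of_le_of_ne (hc i₀) (Ne.symm hi₀c)
    obtain ⟨hch1, hch2⟩ := hchord i₀ hi₀s haA haB
    set t := min (c i₀) (ε / 2) with htdef
    have htpos : 0 < t := lt_min hc0pos (by linarith)
    have htc : t ≤ c i₀ := min_le_left _ _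
    have htε : t ≤ ε / 2 := min_le_right _ _
    set c' := Function.update c i₀ (c i₀ - t) with hc'def
    set ε' := ε - 2 * t with hε'def
    have hc' : ∀ i, 0 ≤ c' i := by
      intro i
      rcases eq_or_ne i i₀ with rfl | h
      · rw [hc'def, Function.update_self]; linarith
      · rw [hc'def, Function.update_of_ne h]; exact hc i
    have hε' : 0 ≤ ε' := by rw [hε'def]; linarith
    have hsplit : ∀ (g : Fin r → ℚ),
        ∑ i ∈ s, g i • (evec n (A i) + evec n (B i))
          = g i₀ • (evec n (A i₀) + evec n (B i₀))
            + ∑ i ∈ s.erase i₀, g i • (evec n (A i) + evec n (B i)) :=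
      fun g => (Finset.add_sum_erase s _ hi₀s).symm
    have hsame : ∑ i ∈ s.erase i₀, c' i • (evec n (A i) + evec n (B i))
        = ∑ i ∈ s.erase i₀, c i • (evec n (A i) + evec n (B i)) :=
      Finset.sum_congr rfl fun i hi => by
        rw [hc'def, Function.update_of_ne (Finset.mem_erase.mp hi).1]
    have hkey : (∑ i ∈ s, c i • (evec n (A i) + evec n (B i))) + ε • evec n a
        = ((∑ i ∈ s, c' i • (evec n (A i) + evec n (B i))) + ε' • evec n a)
          + (t • (evec n a + evec n (A i₀)) + t • (evec n a + evec n (B i₀))) := by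
      rw [hsplit c, hsplit c', hsame, hc'def, Function.update_self, hε'def]
      module
    rw [hkey]
    refine add_mem ?_ (add_mem (smul_mem htpos.le (mem_of hch1))
      (smul_mem htpos.le (mem_of hch2)))
    rcases le_or_gt (c i₀) (ε / 2) with hcase | hcase
    · -- t = c i₀ : recurse
      have htval : t = c i₀ := min_eq_left hcase
      have hc'z : c' i₀ = 0 := by rw [hc'def, Function.update_self, htval]; ring
      apply ih c' ε' ?_ hc' hε'
      · -- new bound
        have h1 : c' i₀ + ∑ i ∈ (s.filter (fun i => a ≠ A i ∧ a ≠ B i)).erase i₀, c' i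
            = ∑ i ∈ s.filter (fun i => a ≠ A i ∧ a ≠ B i), c' i :=
          Finset.add_sum_erase _ c' hi₀f
        have h2 : c i₀ + ∑ i ∈ (s.filter (fun i => a ≠ A i ∧ a ≠ B i)).erase i₀, c i
            = ∑ i ∈ s.filter (fun i => a ≠ A i ∧ a ≠ B i), c i :=
          Finset.add_sum_erase _ c hi₀f
        have h3 : ∑ i ∈ (s.filter (fun i => a ≠ A i ∧ a ≠ B i)).erase i₀, c' i
            = ∑ i ∈ (s.filter (fun i => a ≠ A i ∧ a ≠ B i)).erase i₀, c i :=
          Finset.sum_congr rfl fun i hi => by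
            rw [hc'def, Function.update_of_ne (Finset.mem_erase.mp hi).1]
        rw [hc'z, h3] at h1
        rw [hε'def, htval]
        linarith
      · -- card decreases
        have hsub2 : s.filter (fun i => c' i ≠ 0) ⊆ (s.filter (fun i => c i ≠ 0)).erase i₀ := by
          intro i hi
          rw [Finset.mem_filter] at hi
          have hne : i ≠ i₀ := fun h => hi.2 (h ▸ hc'z)
          refine Finset.mem_erase.mpr ⟨hne, Finset.mem_filter.mpr ⟨hi.1, ?_⟩⟩
          rw [hc'def, Function.update_of_ne hne] at hi
          exact hi.2
        have hi₀mem : i₀ ∈ s.filter (fun i => c i ≠ 0) := Finset.mem_filter.mpr ⟨hi₀s, hi₀c⟩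
        calc (s.filter (fun i => c' i ≠ 0)).card
            ≤ ((s.filter (fun i => c i ≠ 0)).erase i₀).card := Finset.card_le_card hsub2
          _ = (s.filter (fun i => c i ≠ 0)).card - 1 := Finset.card_erase_of_mem hi₀mem
          _ ≤ N := by omega
    · -- t = ε/2 : ε' = 0, direct
      have htval : t = ε / 2 := min_eq_right hcase.le
      have hε'z : ε' = 0 := by rw [hε'def, htval]; ring
      rw [hε'z, zero_smul, add_zero]
      exact hz c' hc'

end ConeAux


section Helpers
open ConeAux
variable {n : ℕ} {I : Set (Sym2 (Fin (n + 1)))}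

lemma jset_props (hdiag : ∀ i : Fin (n + 1), s(i, i) ∉ I)
    {p q : Fin (n+1)} (h : s(p,q) ∈ Jset n I) : p ≠ 0 ∧ q ≠ 0 ∧ p ≠ q := by
  rcases h with ⟨hI, h0⟩ | ⟨a, b, ha, hb, hab, heq, h0a, h0b⟩
  · rw [Sym2.mem_iff] at h0
    push_neg at h0
    refine ⟨Ne.symm h0.1, Ne.symm h0.2, fun h => ?_⟩
    rw [h] at hI
    exact hdiag q hI
  · rw [Sym2.eq_iff] at heq
    rcases heq with ⟨rfl, rfl⟩ | ⟨rfl, rfl⟩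
    · exact ⟨ha, hb, hab⟩
    · exact ⟨hb, ha, hab.symm⟩

lemma jset_chord (hdiag : ∀ i : Fin (n + 1), s(i, i) ∉ I)
    (hex : ∀ i j k l : Fin (n + 1), s(i, j) ∈ I → s(k, l) ∈ I →
      (s(j, l) ∈ I ∧ s(i, k) ∈ I) ∨ (s(j, k) ∈ I ∧ s(i, l) ∈ I))
    {a p q : Fin (n+1)} (ha0 : a ≠ 0) (haI : s(0, a) ∈ I)
    (hpq : s(p,q) ∈ Jset n I) (hap : a ≠ p) (haq : a ≠ q) :
    s(a,p) ∈ Jset n I ∧ s(a,q) ∈ Jset n I := by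
  obtain ⟨hp0, hq0, hpqne⟩ := jset_props hdiag hpq
  rcases hpq with ⟨hI, h0⟩ | ⟨b1, b2, hb1, hb2, hb12, heq, h01, h02⟩
  · rcases hex 0 a p q haI hI with ⟨haqI, h0pI⟩ | ⟨hapI, h0qI⟩
    · constructor
      · exact Or.inr ⟨a, p, ha0, hp0, hap, rfl, haI, h0pI⟩
      · refine Or.inl ⟨haqI, ?_⟩
        rw [Sym2.mem_iff]
        push_neg
        exact ⟨Ne.symm ha0, Ne.symm hq0⟩
    · constructor
      · refine Or.inl ⟨hapI, ?_⟩
        rw [Sym2.mem_iff]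
        push_neg
        exact ⟨Ne.symm ha0, Ne.symm hp0⟩
      · exact Or.inr ⟨a, q, ha0, hq0, haq, rfl, haI, h0qI⟩
  · have hpqI : s(0, p) ∈ I ∧ s(0, q) ∈ I := by
      rw [Sym2.eq_iff] at heq
      rcases heq with ⟨rfl, rfl⟩ | ⟨rfl, rfl⟩
      · exact ⟨h01, h02⟩
      · exact ⟨h02, h01⟩
    exact ⟨Or.inr ⟨a, p, ha0, hp0, hap, rfl, haI, hpqI.1⟩,
      Or.inr ⟨a, q, ha0, hq0, haq, rfl, haI, hpqI.2⟩⟩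

end Helpers

/-- For an exchange-closed set `I`, `ω_J = ω_I ∩ Ω*`, where `ω_I = cone(w_η : η ∈ I)`,
`ω_J = cone(w_η : η ∈ J)` and `Ω* = cone(eᵢ + eⱼ : 1 ≤ i < j ≤ n)`. -/
theorem stmt_8 (n : ℕ) (hn : 2 ≤ n) (I : Set (Sym2 (Fin (n + 1))))
    (hdiag : ∀ i : Fin (n + 1), s(i, i) ∉ I)
    (hex : ∀ i j k l : Fin (n + 1), s(i, j) ∈ I → s(k, l) ∈ I →
      (s(j, l) ∈ I ∧ s(i, k) ∈ I) ∨ (s(j, k) ∈ I ∧ s(i, l) ∈ I)) :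
    coneOf {w | ∃ i j : Fin (n + 1), s(i, j) ∈ Jset n I ∧ w = evec n i + evec n j}
    = coneOf {w | ∃ i j : Fin (n + 1), s(i, j) ∈ I ∧ w = evec n i + evec n j}
      ∩ coneOf {w | ∃ i j : Fin (n + 1), i ≠ 0 ∧ j ≠ 0 ∧ i ≠ j ∧
          w = evec n i + evec n j} := by
  classical
  open ConeAux in
  set JG := {w | ∃ i j : Fin (n + 1), s(i, j) ∈ Jset n I ∧ w = evec n i + evec n j} with hJG
  set IG := {w | ∃ i j : Fin (n + 1), s(i, j) ∈ I ∧ w = evec n i + evec n j} with hIG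
  set ΩG := {w | ∃ i j : Fin (n + 1), i ≠ 0 ∧ j ≠ 0 ∧ i ≠ j ∧
      w = evec n i + evec n j} with hΩG
  apply Set.Subset.antisymm
  · -- easy direction
    apply Set.subset_inter
    · apply ConeAux.coneOf_le
      rintro w ⟨p, q, hpq, rfl⟩
      rcases hpq with ⟨hI, h0⟩ | ⟨a, b, ha, hb, hab, heq, h0a, h0b⟩
      · exact ConeAux.mem_of ⟨p, q, hI, rfl⟩
      · have hpqI : s((0:Fin (n+1)), p) ∈ I ∧ s((0:Fin (n+1)), q) ∈ I := by
          rw [Sym2.eq_iff] at heq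
          rcases heq with ⟨rfl, rfl⟩ | ⟨rfl, rfl⟩
          · exact ⟨h0a, h0b⟩
          · exact ⟨h0b, h0a⟩
        have hrw : evec n p + evec n q
            = (evec n 0 + evec n p) + (evec n 0 + evec n q) := by
          rw [ConeAux.evec_zero]
          module
        rw [hrw]
        exact ConeAux.add_mem (ConeAux.mem_of ⟨0, p, hpqI.1, rfl⟩)
          (ConeAux.mem_of ⟨0, q, hpqI.2, rfl⟩)
    · apply ConeAux.coneOf_le
      rintro w ⟨p, q, hpq, rfl⟩
      obtain ⟨hp0, hq0, hpqne⟩ := jset_props hdiag hpq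
      exact ConeAux.mem_of ⟨p, q, hp0, hq0, hpqne, rfl⟩
  · -- hard direction
    rintro x ⟨hxI, hxΩ⟩
    -- facet inequality from Ω*
    have hfacet : ∀ k : Fin (n+1), 2 * x k ≤ ∑ p, x p := by
      intro k
      obtain ⟨r2, c2, v2, hc2, hv2, hx2⟩ := hxΩ
      choose P Q hP0 hQ0 hPQ hveq using hv2
      have hsum : ∑ p, x p = ∑ i, c2 i * 2 := by
        rw [hx2]
        calc ∑ p, (∑ i, c2 i • v2 i) p
            = ∑ p, ∑ i, c2 i * (evec n (P i) p + evec n (Q i) p) := by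
              refine Finset.sum_congr rfl fun p _ => ?_
              rw [Finset.sum_apply]
              refine Finset.sum_congr rfl fun i _ => ?_
              rw [hveq i]
              simp
          _ = ∑ i, ∑ p, c2 i * (evec n (P i) p + evec n (Q i) p) := Finset.sum_comm
          _ = ∑ i, c2 i * 2 := by
              refine Finset.sum_congr rfl fun i _ => ?_
              rw [← Finset.mul_sum, Finset.sum_add_distrib,
                ConeAux.sum_evec (hP0 i), ConeAux.sum_evec (hQ0 i)]
              norm_num
      have hxk : x k = ∑ i, c2 i * (evec n (P i) k + evec n (Q i) k) := by
        rw [hx2, Finset.sum_apply]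
        refine Finset.sum_congr rfl fun i _ => ?_
        rw [hveq i]
        simp
      rw [hsum, hxk, Finset.mul_sum]
      apply Finset.sum_le_sum
      intro i _
      have hle1 : evec n (P i) k + evec n (Q i) k ≤ 1 := by
        rw [ConeAux.evec_apply, ConeAux.evec_apply]
        split_ifs with h1 h2 h2
        · exact absurd (h1.2.symm.trans h2.2) (hPQ i)
        · norm_num
        · norm_num
        · norm_num
      nlinarith [hc2 i, ConeAux.evec_nonneg n (P i) k, ConeAux.evec_nonneg n (Q i) k]
    -- decompose the I-representation
    obtain ⟨r, c, v, hc, hv, hxe⟩ := hxI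
    choose A0 B0 hI0 hv0 using hv
    set A : Fin r → Fin (n+1) := fun i => if B0 i = 0 then B0 i else A0 i with hA
    set B : Fin r → Fin (n+1) := fun i => if B0 i = 0 then A0 i else B0 i with hB
    have hAe : ∀ i, B0 i = 0 → A i = B0 i ∧ B i = A0 i := by
      intro i h
      constructor <;> simp [hA, hB, h]
    have hAe' : ∀ i, B0 i ≠ 0 → A i = A0 i ∧ B i = B0 i := by
      intro i h
      constructor <;> simp [hA, hB, h]
    have hABI : ∀ i, s(A i, B i) ∈ I := by
      intro i
      by_cases h : B0 i = 0
      · have hsw : s(B0 i, A0 i) = s(A0 i, B0 i) := Sym2.eq_swap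
        rw [(hAe i h).1, (hAe i h).2, hsw]
        exact hI0 i
      · rw [(hAe' i h).1, (hAe' i h).2]
        exact hI0 i
    have hvi : ∀ i, v i = evec n (A i) + evec n (B i) := by
      intro i
      by_cases h : B0 i = 0
      · rw [(hAe i h).1, (hAe i h).2, hv0 i]
        exact add_comm _ _
      · rw [(hAe' i h).1, (hAe' i h).2]
        exact hv0 i
    have hABne : ∀ i, A i ≠ B i := by
      intro i h
      have := hABI i
      rw [h] at this
      exact hdiag (B i) this
    have hB0 : ∀ i, B i ≠ 0 := by
      intro i h
      by_cases hb : B0 i = 0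
      · rw [(hAe i hb).2] at h
        have := hI0 i
        rw [h, hb] at this
        exact hdiag 0 this
      · rw [(hAe' i hb).2] at h
        exact hb h
    set Z := univ.filter (fun i : Fin r => A i = 0) with hZ
    set Zc := univ.filter (fun i : Fin r => ¬ A i = 0) with hZc
    have hA0Zc : ∀ i ∈ Zc, A i ≠ 0 := fun i hi => (Finset.mem_filter.mp hi).2
    set d : Fin (n+1) → ℚ := fun p => ∑ i ∈ Z.filter (fun i => B i = p), c i with hd
    have hdnn : ∀ p, 0 ≤ d p := fun p => Finset.sum_nonneg fun i _ => hc i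
    have hd0 : d 0 = 0 :=
      Finset.sum_eq_zero fun i hi => absurd (Finset.mem_filter.mp hi).2 (hB0 i)
    have hdsupp : ∀ p, d p ≠ 0 → p ≠ 0 ∧ s((0:Fin (n+1)), p) ∈ I := by
      intro p hp
      obtain ⟨i, hi, -⟩ := Finset.exists_ne_zero_of_sum_ne_zero hp
      rw [Finset.mem_filter, Finset.mem_filter] at hi
      obtain ⟨⟨-, hAi⟩, hBi⟩ := hi
      refine ⟨hBi ▸ hB0 i, ?_⟩
      have := hABI i
      rwa [hAi, hBi] at this
    set zc : Fin (n+1) → ℚ := ∑ i ∈ Zc, c i • (evec n (A i) + evec n (B i)) with hzc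
    have hy : ∑ i ∈ Z, c i • v i = d := by
      funext p
      rw [Finset.sum_apply]
      have hterm : ∀ i ∈ Z, (c i • v i) p = if B i = p then c i else 0 := by
        intro i hi
        have hAi : A i = 0 := (Finset.mem_filter.mp hi).2
        have h1 : (c i • v i) p = c i * (evec n (A i) p + evec n (B i) p) := by
          rw [hvi i]; simp
        rw [h1, hAi, ConeAux.evec_zero, ConeAux.evec_apply]
        by_cases h : B i = p
        · rw [if_pos ⟨hB0 i, h.symm⟩, if_pos h]
          simp
        · rw [if_neg (fun hh => h hh.2.symm), if_neg h]
          simp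
      rw [Finset.sum_congr rfl hterm]
      exact (Finset.sum_filter _ _).symm
    have hxsplit : x = zc + d := by
      have hsplit0 : ∑ i, c i • v i = (∑ i ∈ Z, c i • v i) + ∑ i ∈ Zc, c i • v i :=
        (Finset.sum_filter_add_sum_filter_not univ (fun i : Fin r => A i = 0) _).symm
      have h2 : ∑ i ∈ Zc, c i • v i = zc := by
        rw [hzc]
        exact Finset.sum_congr rfl fun i _ => by rw [hvi i]
      rw [hxe, hsplit0, hy, h2]
      exact add_comm d zc
    set D := ∑ p, d p with hD
    -- the set T of neighbours of 0
    set T : Set (Fin (n+1)) := {p | p ≠ 0 ∧ s((0:Fin (n+1)), p) ∈ I} with hT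
    have hT0 : ∀ t ∈ T, t ≠ 0 := fun t ht => ht.1
    have hTG : ∀ p q : Fin (n+1), p ∈ T → q ∈ T → p ≠ q →
        (evec n p + evec n q) ∈ JG := by
      intro p q hp hq hpq
      exact ⟨p, q, Or.inr ⟨p, q, hp.1, hq.1, hpq, rfl, hp.2, hq.2⟩, rfl⟩
    have hgenJ : ∀ i ∈ Zc, (evec n (A i) + evec n (B i)) ∈ JG := by
      intro i hi
      refine ⟨A i, B i, Or.inl ⟨hABI i, ?_⟩, rfl⟩
      rw [Sym2.mem_iff]
      push_neg
      exact ⟨Ne.symm (hA0Zc i hi), Ne.symm (hB0 i)⟩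
    have hzcJ : zc ∈ coneOf JG := by
      rw [hzc]
      exact ConeAux.sum_mem fun i hi =>
        ConeAux.smul_mem (hc i) (ConeAux.mem_of (hgenJ i hi))
    by_cases hbal : ∀ k, 2 * d k ≤ D
    · -- balanced case
      have hdJ : d ∈ coneOf JG :=
        ConeAux.lemmaL hn T JG hT0 hTG d hdnn (fun t ht => hdsupp t ht) hbal
      rw [hxsplit]
      exact ConeAux.add_mem hzcJ hdJ
    · -- unbalanced case
      push_neg at hbal
      obtain ⟨a, haD⟩ := hbal
      have hdaD : d a ≤ D := Finset.single_le_sum (fun p _ => hdnn p) (mem_univ a)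
      have hdapos : 0 < d a := by linarith
      obtain ⟨ha0, haI⟩ := hdsupp a (ne_of_gt hdapos)
      set ε := 2 * d a - D with hε
      have hεpos : 0 < ε := by rw [hε]; linarith
      -- remaining mass bounds
      have hDa : ∑ p ∈ univ.erase a, d p = D - d a := by
        rw [hD, ← Finset.add_sum_erase univ d (mem_univ a)]; ring
      have hdk : ∀ k, k ≠ a → d k ≤ D - d a := by
        intro k hk
        rw [← hDa]
        exact Finset.single_le_sum (fun p _ => hdnn p)
          (Finset.mem_erase.mpr ⟨hk, mem_univ k⟩)
      set d' : Fin (n+1) → ℚ := fun p => d p - ε * evec n a p with hd'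
      have hd'a : d' a = d a - ε := by
        simp [hd', ConeAux.evec_apply, ha0]
      have hd'o : ∀ p, p ≠ a → d' p = d p := by
        intro p hp
        simp [hd', ConeAux.evec_apply, hp]
      have hd'nn : ∀ p, 0 ≤ d' p := by
        intro p
        rcases eq_or_ne p a with rfl | hp
        · rw [hd'a, hε]; linarith
        · rw [hd'o p hp]; exact hdnn p
      have hd'sum : ∑ p, d' p = D - ε := by
        simp only [hd']
        rw [Finset.sum_sub_distrib, ← Finset.mul_sum, ConeAux.sum_evec ha0, ← hD]
        ring
      have hd'bal : ∀ k, 2 * d' k ≤ ∑ p, d' p := by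
        intro k
        rw [hd'sum]
        rcases eq_or_ne k a with rfl | hk
        · rw [hd'a, hε]; linarith
        · rw [hd'o k hk, hε]
          have := hdk k hk
          linarith
      have hd'supp : ∀ p, d' p ≠ 0 → p ∈ T := by
        intro p hp
        rcases eq_or_ne p a with rfl | hpa
        · exact ⟨ha0, haI⟩
        · rw [hd'o p hpa] at hp
          exact hdsupp p hp
      have hd'J : d' ∈ coneOf JG :=
        ConeAux.lemmaL hn T JG hT0 hTG d' hd'nn hd'supp hd'bal
      -- the bound for lemmaM
      have hzca : zc a = ∑ i ∈ Zc, c i * (evec n (A i) a + evec n (B i) a) := by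
        rw [hzc, Finset.sum_apply]
        exact Finset.sum_congr rfl fun i _ => by simp
      have hzcsum : ∑ p, zc p = ∑ i ∈ Zc, c i * 2 := by
        calc ∑ p, zc p
            = ∑ p, ∑ i ∈ Zc, c i * (evec n (A i) p + evec n (B i) p) := by
              refine Finset.sum_congr rfl fun p _ => ?_
              rw [hzc, Finset.sum_apply]
              exact Finset.sum_congr rfl fun i _ => by simp
          _ = ∑ i ∈ Zc, ∑ p, c i * (evec n (A i) p + evec n (B i) p) := Finset.sum_comm
          _ = ∑ i ∈ Zc, c i * 2 := by
              refine Finset.sum_congr rfl fun i hi => ?_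
              rw [← Finset.mul_sum, Finset.sum_add_distrib,
                ConeAux.sum_evec (hA0Zc i hi), ConeAux.sum_evec (hB0 i)]
              norm_num
      have hsplitsum : ∑ p, x p = ∑ p, zc p + D := by
        rw [hD, hxsplit, ← Finset.sum_add_distrib]
        exact Finset.sum_congr rfl fun p _ => rfl
      have hxa : x a = zc a + d a := by rw [hxsplit]; rfl
      have hmass : ∑ i ∈ Zc, c i - zc a
          = ∑ i ∈ Zc.filter (fun i => a ≠ A i ∧ a ≠ B i), c i := by
        rw [hzca, ← Finset.sum_sub_distrib]
        rw [← Finset.sum_filter_add_sum_filter_not Zc (fun i => a ≠ A i ∧ a ≠ B i)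
          (fun i => c i - c i * (evec n (A i) a + evec n (B i) a))]
        have h1 : ∑ i ∈ Zc.filter (fun i => a ≠ A i ∧ a ≠ B i),
            (c i - c i * (evec n (A i) a + evec n (B i) a))
            = ∑ i ∈ Zc.filter (fun i => a ≠ A i ∧ a ≠ B i), c i := by
          refine Finset.sum_congr rfl fun i hi => ?_
          obtain ⟨-, hA1, hB1⟩ := Finset.mem_filter.mp hi
          rw [ConeAux.evec_apply, ConeAux.evec_apply,
            if_neg (fun hh => hA1 hh.2), if_neg (fun hh => hB1 hh.2)]
          ring
        have h2 : ∑ i ∈ Zc.filter (fun i => ¬(a ≠ A i ∧ a ≠ B i)),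
            (c i - c i * (evec n (A i) a + evec n (B i) a)) = 0 := by
          refine Finset.sum_eq_zero fun i hi => ?_
          obtain ⟨hiZc, hcond⟩ := Finset.mem_filter.mp hi
          push_neg at hcond
          have hAi0 : A i ≠ 0 := hA0Zc i hiZc
          have hBi0 : B i ≠ 0 := hB0 i
          by_cases hA1 : a = A i
          · have haB : a ≠ B i := fun h => hABne i (hA1.symm.trans h)
            rw [ConeAux.evec_apply, ConeAux.evec_apply,
              if_pos ⟨hAi0, hA1⟩, if_neg (fun hh => haB hh.2)]
            ring
          · have hB1 : a = B i := hcond hA1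
            rw [ConeAux.evec_apply, ConeAux.evec_apply,
              if_neg (fun hh => hA1 hh.2), if_pos ⟨hBi0, hB1⟩]
            ring
        rw [h1, h2, add_zero]
      have hbound : ε ≤ 2 * ∑ i ∈ Zc.filter (fun i => a ≠ A i ∧ a ≠ B i), c i := by
        have hf := hfacet a
        rw [hsplitsum, hxa, hzcsum] at hf
        have h3 : ∑ i ∈ Zc, c i * 2 = (∑ i ∈ Zc, c i) * 2 := by
          rw [Finset.sum_mul]
        rw [h3] at hf
        rw [hε]
        linarith [hmass]
      have hzεJ : zc + ε • evec n a ∈ coneOf JG := by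
        rw [hzc]
        apply ConeAux.lemmaM JG a Zc A B hgenJ ?_ c ε hc hεpos.le hbound
        intro i hi hA1 hB1
        have hJi : s(A i, B i) ∈ Jset n I := Or.inl ⟨hABI i, by
          rw [Sym2.mem_iff]; push_neg
          exact ⟨Ne.symm (hA0Zc i hi), Ne.symm (hB0 i)⟩⟩
        obtain ⟨hc1, hc2⟩ := jset_chord hdiag hex ha0 haI hJi hA1 hB1
        exact ⟨⟨a, A i, hc1, rfl⟩, ⟨a, B i, hc2, rfl⟩⟩
      have hfinal : x = (zc + ε • evec n a) + d' := by
        rw [hxsplit]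
        funext p
        have h1 : d' p = d p - ε * evec n a p := rfl
        show zc p + d p = zc p + ε * evec n a p + d' p
        rw [h1]; ring
      rw [hfinal]
      exact ConeAux.add_mem hzεJ hd'J
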